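/- Let X, Y be finite random variables, c : X × Y → Z with resolving matrix R (for p_X) of full column rank, Z = c(X,Y) with X ⟂ Y. Suppose Y' is independent of X with distribution q, and the Wasserstein-type objective sup_{‖D‖_L ≤ 1} E_Z[D(Z)] − E_{X,Y'}[D(c(X,Y'))] equals 0. Then q equals the distribution of Y. -/

import Mathlib

private lemma finite_lip {Z : Type*} [Fintype Z] [MetricSpace Z] (f : Z → ℝ) :
    ∃ K : ℝ, 0 ≤ K ∧ ∀ a b : Z, dist (f a) (f b) ≤ K * dist a b := by
  classical
  set s : Finset (Z × Z) := Finset.univ.offDiag with hs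
  by_cases hne : s.Nonempty
  · set ε : ℝ := s.inf' hne (fun p => dist p.1 p.2) with hε
    set M : ℝ := s.sup' hne (fun p => dist (f p.1) (f p.2)) with hM
    have hεpos : 0 < ε := by
      rw [hε]
      refine (Finset.lt_inf'_iff hne).2 fun p hp => ?_
      exact dist_pos.2 (Finset.mem_offDiag.1 hp).2.2
    have hMnn : 0 ≤ M := by
      obtain ⟨p, hp⟩ := hne
      exact le_trans dist_nonneg
        (Finset.le_sup' (fun p => dist (f p.1) (f p.2)) hp)
    refine ⟨M / ε, div_nonneg hMnn hεpos.le, fun a b => ?_⟩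
    by_cases hab : a = b
    · simp [hab]
    · have hmem : (a, b) ∈ s := by
        rw [hs]; exact Finset.mem_offDiag.2 ⟨Finset.mem_univ _, Finset.mem_univ _, hab⟩
      have h1 : dist (f a) (f b) ≤ M :=
        Finset.le_sup' (fun p => dist (f p.1) (f p.2)) hmem
      have h2 : ε ≤ dist a b := Finset.inf'_le (fun p => dist p.1 p.2) hmem
      have h3 : 0 ≤ M / ε := div_nonneg hMnn hεpos.le
      have h4 : M / ε * ε ≤ M / ε * dist a b := mul_le_mul_of_nonneg_left h2 h3
      rw [div_mul_cancel₀ M hεpos.ne'] at h4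
      linarith
  · refine ⟨0, le_refl _, fun a b => ?_⟩
    have hab : a = b := by
      by_contra h
      exact hne ⟨(a, b), Finset.mem_offDiag.2 ⟨Finset.mem_univ _, Finset.mem_univ _, h⟩⟩
    simp [hab]

/-- If the resolving matrix has full column rank and the Wasserstein-type adversarial
objective `sup_{‖D‖_L ≤ 1} E_Z[D] − E_{X,Y'}[D(c(X,Y'))]` is zero (equivalently, every
1-Lipschitz discriminator achieves a nonpositive gap, since `D = 0` is admissible), then
the alternative component distribution `q` of `Y'` equals `p_Y`. -/
theorem component_identifiable_of_zero_wasserstein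
    {X Y Z : Type*} [Fintype X] [Fintype Y] [Fintype Z] [DecidableEq Z] [MetricSpace Z]
    (c : X × Y → Z)
    (pX : X → ℝ) (pY : Y → ℝ)
    (hpX_nonneg : ∀ x, 0 ≤ pX x) (hpX_sum : ∑ x, pX x = 1)
    (hpY_nonneg : ∀ y, 0 ≤ pY y) (hpY_sum : ∑ y, pY y = 1)
    (hrank : LinearIndependent ℝ
      (fun y : Y => (fun z : Z => ∑ x, pX x * (if z = c (x, y) then (1 : ℝ) else 0))))
    (q : Y → ℝ) (hq_nonneg : ∀ y, 0 ≤ q y) (hq_sum : ∑ y, q y = 1)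
    (hobj : ∀ D : Z → ℝ, LipschitzWith 1 D →
      (∑ z : Z, (∑ x, ∑ y, pX x * pY y * (if z = c (x, y) then (1 : ℝ) else 0)) * D z) -
      (∑ x, ∑ y, pX x * q y * D (c (x, y))) ≤ 0) :
    q = pY := by
  classical
  -- the gap vanishes on all 1-Lipschitz functions
  have hzero1 : ∀ D : Z → ℝ, LipschitzWith 1 D →
      (∑ z : Z, (∑ x, ∑ y, pX x * pY y * (if z = c (x, y) then (1 : ℝ) else 0)) * D z) -
      (∑ x, ∑ y, pX x * q y * D (c (x, y))) = 0 := by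
    intro D hD
    have h1 := hobj D hD
    have h2 := hobj (-D) hD.neg
    simp only [Pi.neg_apply, mul_neg, Finset.sum_neg_distrib] at h2
    linarith
  -- the gap vanishes on all functions, by scaling
  have hzero : ∀ D : Z → ℝ,
      (∑ z : Z, (∑ x, ∑ y, pX x * pY y * (if z = c (x, y) then (1 : ℝ) else 0)) * D z) -
      (∑ x, ∑ y, pX x * q y * D (c (x, y))) = 0 := by
    intro D
    obtain ⟨K, hK0, hK⟩ := finite_lip D
    have hK1 : (0:ℝ) < K + 1 := by linarith
    have hlip : LipschitzWith 1 (fun z => D z / (K + 1)) := by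
      apply LipschitzWith.of_dist_le_mul
      intro a b
      have hab := hK a b
      rw [Real.dist_eq] at hab ⊢
      rw [div_sub_div_same, abs_div, abs_of_pos hK1, div_le_iff₀ hK1]
      have hd : (0:ℝ) ≤ dist a b := dist_nonneg
      push_cast
      nlinarith
    have h := hzero1 (fun z => D z / (K + 1)) hlip
    have e1 : (∑ z : Z, (∑ x, ∑ y, pX x * pY y * (if z = c (x, y) then (1 : ℝ) else 0)) *
        (D z / (K + 1))) =
        (∑ z : Z, (∑ x, ∑ y, pX x * pY y * (if z = c (x, y) then (1 : ℝ) else 0)) * D z)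
          / (K + 1) := by
      rw [Finset.sum_div]
      exact Finset.sum_congr rfl fun z _ => by ring
    have e2 : (∑ x, ∑ y, pX x * q y * (D (c (x, y)) / (K + 1))) =
        (∑ x, ∑ y, pX x * q y * D (c (x, y))) / (K + 1) := by
      rw [Finset.sum_div]
      refine Finset.sum_congr rfl fun x _ => ?_
      rw [Finset.sum_div]
      exact Finset.sum_congr rfl fun y _ => by ring
    rw [e1, e2, div_sub_div_same] at h
    rcases div_eq_zero_iff.1 h with h' | h'
    · exact h'
    · linarith
  -- pointwise equality of the two pushforward vectors
  have key : ∀ z : Z,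
      (∑ x, ∑ y, pX x * pY y * (if z = c (x, y) then (1 : ℝ) else 0)) =
      (∑ x, ∑ y, pX x * q y * (if z = c (x, y) then (1 : ℝ) else 0)) := by
    intro z0
    have h := hzero (fun z => if z = z0 then 1 else 0)
    simp only [mul_ite, mul_one, mul_zero, Finset.sum_ite_eq', Finset.mem_univ,
      if_true] at h
    have hR : (∑ x, ∑ y, if c (x, y) = z0 then pX x * q y else 0) =
        ∑ x, ∑ y, pX x * q y * (if z0 = c (x, y) then (1 : ℝ) else 0) := by
      refine Finset.sum_congr rfl fun x _ => Finset.sum_congr rfl fun y _ => ?_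
      by_cases hxy : c (x, y) = z0
      · rw [if_pos hxy, if_pos hxy.symm, mul_one]
      · rw [if_neg hxy, if_neg (fun h => hxy h.symm), mul_zero]
    have hL : (∑ x, ∑ y, if z0 = c (x, y) then pX x * pY y else 0) =
        ∑ x, ∑ y, pX x * pY y * (if z0 = c (x, y) then (1 : ℝ) else 0) := by
      refine Finset.sum_congr rfl fun x _ => Finset.sum_congr rfl fun y _ => ?_
      by_cases h' : z0 = c (x, y) <;> simp [h']
    rw [hR, hL] at h
    linarith
  -- conclude via linear independence
  have hrank' := linearIndependent_iff'.1 hrank Finset.univ (fun y => pY y - q y)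
  have hsum : ∑ y : Y, (pY y - q y) •
      (fun z : Z => ∑ x, pX x * (if z = c (x, y) then (1 : ℝ) else 0)) = 0 := by
    funext z
    simp only [Finset.sum_apply, Pi.smul_apply, smul_eq_mul, Pi.zero_apply]
    have hz := key z
    have l1 : ∑ y, (pY y - q y) * (∑ x, pX x * (if z = c (x, y) then (1:ℝ) else 0)) =
        ∑ y, ∑ x, (pY y - q y) * (pX x * (if z = c (x, y) then (1:ℝ) else 0)) :=
      Finset.sum_congr rfl fun y _ => by rw [Finset.mul_sum]
    rw [l1, Finset.sum_comm]
    have l2 : ∀ x : X, (∑ y, (pY y - q y) * (pX x * (if z = c (x, y) then (1:ℝ) else 0))) =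
        (∑ y, pX x * pY y * (if z = c (x, y) then (1:ℝ) else 0)) -
        (∑ y, pX x * q y * (if z = c (x, y) then (1:ℝ) else 0)) := by
      intro x
      rw [← Finset.sum_sub_distrib]
      exact Finset.sum_congr rfl fun y _ => by ring
    rw [Finset.sum_congr rfl fun x _ => l2 x, Finset.sum_sub_distrib]
    linarith
  have hy := fun y => hrank' hsum y (Finset.mem_univ y)
  funext y
  have h := hy y
  linarith
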